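/- Every 2×2 complex matrix R that is a contraction (i.e. 1 − RᴴR is positive semidefinite) can be written as a convex combination of two unitary matrices: there exist p ∈ [0,1] and unitary 2×2 matrices U and V such that R = p·U + (1−p)·V. -/

import Mathlib

open Matrix
open scoped ComplexOrder

lemma unit2_mem (u : Fin 2 → ℂ) (hu : star (u 0) * u 0 + star (u 1) * u 1 = 1) :
    Matrix.of ![![u 0, -star (u 1)], ![u 1, star (u 0)]] ∈ Matrix.unitaryGroup (Fin 2) ℂ := by
  rw [Matrix.mem_unitaryGroup_iff']
  simp only [Complex.star_def] at hu
  ext i j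
  fin_cases i <;> fin_cases j <;>
    simp [Matrix.mul_apply, Fin.sum_univ_two, Matrix.one_apply, Matrix.star_apply,
      Complex.star_def] <;>
    first | ring1 | linear_combination hu

lemma unit2_mem' (u : Fin 2 → ℂ) (hu : star (u 0) * u 0 + star (u 1) * u 1 = 1) :
    Matrix.of ![![-star (u 1), u 0], ![star (u 0), u 1]] ∈ Matrix.unitaryGroup (Fin 2) ℂ := by
  rw [Matrix.mem_unitaryGroup_iff']
  simp only [Complex.star_def] at hu
  ext i j
  fin_cases i <;> fin_cases j <;>
    simp [Matrix.mul_apply, Fin.sum_univ_two, Matrix.one_apply, Matrix.star_apply,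
      Complex.star_def] <;>
    first | ring1 | linear_combination hu

lemma polar2 (M : Matrix (Fin 2) (Fin 2) ℂ) (d : Fin 2 → ℝ) (hd : ∀ i, 0 ≤ d i)
    (hM : Mᴴ * M = Matrix.diagonal fun i => (d i : ℂ)) :
    ∃ W ∈ Matrix.unitaryGroup (Fin 2) ℂ,
      M = W * Matrix.diagonal fun i => (Real.sqrt (d i) : ℂ) := by
  have hsq : ∀ i, (Real.sqrt (d i) : ℂ) * (Real.sqrt (d i) : ℂ) = (d i : ℂ) := fun i => by
    rw [← Complex.ofReal_mul, Real.mul_self_sqrt (hd i)]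
  have hcol : ∀ j, d j = 0 → ∀ k, M k j = 0 := by
    intro j hj k
    have h1 : (Mᴴ * M) j j = 0 := by rw [hM]; simp [hj]
    rw [Matrix.mul_apply] at h1
    simp only [Matrix.conjTranspose_apply] at h1
    have h2 : ∑ k, (Complex.normSq (M k j) : ℂ) = 0 := by
      rw [← h1]
      refine Finset.sum_congr rfl fun k _ => ?_
      rw [Complex.star_def, Complex.normSq_eq_conj_mul_self]
    have h3 : ∑ k, Complex.normSq (M k j) = 0 := by exact_mod_cast h2
    have h4 := (Finset.sum_eq_zero_iff_of_nonneg
      (fun i _ => Complex.normSq_nonneg (M i j))).mp h3 k (Finset.mem_univ k)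
    exact Complex.normSq_eq_zero.mp h4
  have hdot : ∀ j, star (M 0 j) * M 0 j + star (M 1 j) * M 1 j = (d j : ℂ) := by
    intro j
    have h := congrFun (congrFun hM j) j
    simpa [Matrix.mul_apply, Fin.sum_univ_two, Matrix.conjTranspose_apply,
      Matrix.diagonal_apply] using h
  by_cases h0 : d 0 = 0 <;> by_cases h1 : d 1 = 0
  · -- both zero : M = 0
    refine ⟨1, one_mem _, ?_⟩
    have hM0 : M = 0 := by
      ext k j
      have hj : d j = 0 := by fin_cases j <;> assumption
      exact hcol j hj k
    have hσ : ∀ i : Fin 2, Real.sqrt (d i) = 0 := by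
      intro i; fin_cases i <;> simp [h0, h1]
    rw [hM0, one_mul]
    ext k j
    simp [Matrix.diagonal_apply, hσ]
  · -- d 0 = 0, d 1 ≠ 0
    have hσpos : 0 < Real.sqrt (d 1) := Real.sqrt_pos.mpr (lt_of_le_of_ne (hd 1) (Ne.symm h1))
    have hσne : ((Real.sqrt (d 1) : ℝ) : ℂ) ≠ 0 := by exact_mod_cast hσpos.ne'
    set u : Fin 2 → ℂ := fun k => ((Real.sqrt (d 1) : ℝ) : ℂ)⁻¹ * M k 1 with hu_def
    have hustar : ∀ k, star (u k) = ((Real.sqrt (d 1) : ℝ) : ℂ)⁻¹ * star (M k 1) := by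
      intro k
      simp [hu_def, Complex.star_def, _root_.map_mul, map_inv₀, Complex.conj_ofReal]
    have hu : star (u 0) * u 0 + star (u 1) * u 1 = 1 := by
      rw [hustar, hustar, hu_def]
      have : ((Real.sqrt (d 1) : ℝ) : ℂ)⁻¹ * star (M 0 1) * (((Real.sqrt (d 1) : ℝ) : ℂ)⁻¹ * M 0 1)
          + ((Real.sqrt (d 1) : ℝ) : ℂ)⁻¹ * star (M 1 1) * (((Real.sqrt (d 1) : ℝ) : ℂ)⁻¹ * M 1 1)
          = ((Real.sqrt (d 1) : ℝ) : ℂ)⁻¹ * ((Real.sqrt (d 1) : ℝ) : ℂ)⁻¹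
            * (star (M 0 1) * M 0 1 + star (M 1 1) * M 1 1) := by ring
      rw [this, hdot 1, ← hsq 1]
      field_simp
    refine ⟨_, unit2_mem' u hu, ?_⟩
    ext k j
    rw [Matrix.mul_diagonal]
    fin_cases k <;> fin_cases j <;>
      simp [hu_def, h0, hcol 0 h0, Real.sqrt_zero] <;>
      field_simp
  · -- d 0 ≠ 0, d 1 = 0
    have hσpos : 0 < Real.sqrt (d 0) := Real.sqrt_pos.mpr (lt_of_le_of_ne (hd 0) (Ne.symm h0))
    have hσne : ((Real.sqrt (d 0) : ℝ) : ℂ) ≠ 0 := by exact_mod_cast hσpos.ne'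
    set u : Fin 2 → ℂ := fun k => ((Real.sqrt (d 0) : ℝ) : ℂ)⁻¹ * M k 0 with hu_def
    have hustar : ∀ k, star (u k) = ((Real.sqrt (d 0) : ℝ) : ℂ)⁻¹ * star (M k 0) := by
      intro k
      simp [hu_def, Complex.star_def, _root_.map_mul, map_inv₀, Complex.conj_ofReal]
    have hu : star (u 0) * u 0 + star (u 1) * u 1 = 1 := by
      rw [hustar, hustar, hu_def]
      have : ((Real.sqrt (d 0) : ℝ) : ℂ)⁻¹ * star (M 0 0) * (((Real.sqrt (d 0) : ℝ) : ℂ)⁻¹ * M 0 0)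
          + ((Real.sqrt (d 0) : ℝ) : ℂ)⁻¹ * star (M 1 0) * (((Real.sqrt (d 0) : ℝ) : ℂ)⁻¹ * M 1 0)
          = ((Real.sqrt (d 0) : ℝ) : ℂ)⁻¹ * ((Real.sqrt (d 0) : ℝ) : ℂ)⁻¹
            * (star (M 0 0) * M 0 0 + star (M 1 0) * M 1 0) := by ring
      rw [this, hdot 0, ← hsq 0]
      field_simp
    refine ⟨_, unit2_mem u hu, ?_⟩
    ext k j
    rw [Matrix.mul_diagonal]
    fin_cases k <;> fin_cases j <;>
      simp [hu_def, h1, hcol 1 h1, Real.sqrt_zero] <;>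
      field_simp
  · -- both nonzero
    have hσne : ∀ i, ((Real.sqrt (d i) : ℝ) : ℂ) ≠ 0 := by
      intro i
      have : 0 < Real.sqrt (d i) := Real.sqrt_pos.mpr
        (lt_of_le_of_ne (hd i) (Ne.symm (by fin_cases i <;> assumption)))
      exact_mod_cast this.ne'
    refine ⟨M * Matrix.diagonal (fun i => ((Real.sqrt (d i) : ℝ) : ℂ)⁻¹), ?_, ?_⟩
    · rw [Matrix.mem_unitaryGroup_iff']
      rw [Matrix.star_mul, Matrix.star_eq_conjTranspose, Matrix.star_eq_conjTranspose,
        Matrix.diagonal_conjTranspose]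
      have hstar : (star fun i => ((Real.sqrt (d i) : ℝ) : ℂ)⁻¹)
          = fun i => ((Real.sqrt (d i) : ℝ) : ℂ)⁻¹ := by
        funext i
        simp [Complex.star_def, map_inv₀, Complex.conj_ofReal]
      rw [hstar]
      calc Matrix.diagonal (fun i => ((Real.sqrt (d i) : ℝ) : ℂ)⁻¹) * Mᴴ
            * (M * Matrix.diagonal fun i => ((Real.sqrt (d i) : ℝ) : ℂ)⁻¹)
          = Matrix.diagonal (fun i => ((Real.sqrt (d i) : ℝ) : ℂ)⁻¹) * (Mᴴ * M)
            * Matrix.diagonal (fun i => ((Real.sqrt (d i) : ℝ) : ℂ)⁻¹) := by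
            simp only [mul_assoc]
        _ = Matrix.diagonal (fun i => ((Real.sqrt (d i) : ℝ) : ℂ)⁻¹ * (d i : ℂ)
              * ((Real.sqrt (d i) : ℝ) : ℂ)⁻¹) := by
            rw [hM, Matrix.diagonal_mul_diagonal, Matrix.diagonal_mul_diagonal]
        _ = 1 := by
            have heq : (fun i => ((Real.sqrt (d i) : ℝ) : ℂ)⁻¹ * (d i : ℂ)
                * ((Real.sqrt (d i) : ℝ) : ℂ)⁻¹) = fun _ => (1 : ℂ) := by
              funext i
              rw [← hsq i]
              field_simp
              exact div_self (hσne i)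
            rw [heq, Matrix.diagonal_one]
    · rw [mul_assoc, Matrix.diagonal_mul_diagonal]
      have : (fun i => ((Real.sqrt (d i) : ℝ) : ℂ)⁻¹ * ((Real.sqrt (d i) : ℝ) : ℂ))
          = fun _ => (1 : ℂ) := by
        funext i
        exact inv_mul_cancel₀ (hσne i)
      rw [this, Matrix.diagonal_one, mul_one]


/-- Every 2×2 complex contraction (`1 − RᴴR` positive semidefinite) is a convex
combination of two unitary matrices. -/
theorem contraction_convex_combination_of_unitaries
    (R : Matrix (Fin 2) (Fin 2) ℂ) (hR : (1 - Rᴴ * R).PosSemidef) :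
    ∃ p : ℝ, p ∈ Set.Icc (0 : ℝ) 1 ∧
      ∃ U ∈ Matrix.unitaryGroup (Fin 2) ℂ, ∃ V ∈ Matrix.unitaryGroup (Fin 2) ℂ,
        R = p • U + (1 - p) • V := by
  have hH : (Rᴴ * R).PosSemidef := Matrix.posSemidef_conjTranspose_mul_self R
  have hherm : (Rᴴ * R).IsHermitian := hH.1
  set d : Fin 2 → ℝ := hherm.eigenvalues with hd_def
  set B : Matrix (Fin 2) (Fin 2) ℂ := (hherm.eigenvectorUnitary : Matrix (Fin 2) (Fin 2) ℂ)
    with hB_def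
  have hBmem : B ∈ Matrix.unitaryGroup (Fin 2) ℂ := hherm.eigenvectorUnitary.2
  have hB1 : Bᴴ * B = 1 := by
    rw [← Matrix.star_eq_conjTranspose]
    exact Matrix.mem_unitaryGroup_iff'.mp hBmem
  have hB1' : B * Bᴴ = 1 := by
    rw [← Matrix.star_eq_conjTranspose]
    exact Matrix.mem_unitaryGroup_iff.mp hBmem
  have hspec : Rᴴ * R = B * Matrix.diagonal (fun i => (d i : ℂ)) * Bᴴ := by
    have := hherm.spectral_theorem
    rw [← Matrix.star_eq_conjTranspose]
    exact this
  have hd0 : ∀ i, 0 ≤ d i := fun i => hH.eigenvalues_nonneg i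
  -- eigenvalues ≤ 1
  have hd1 : ∀ i, d i ≤ 1 := by
    intro i
    set v : Fin 2 → ℂ := fun k => B k i with hv_def
    have hv : (Rᴴ * R) *ᵥ v = d i • v := by
      have h := hherm.mulVec_eigenvectorBasis i
      have hveq : v = ⇑(hherm.eigenvectorBasis i) := by
        funext k
        rw [hv_def]
        exact hherm.eigenvectorUnitary_apply k i
      rw [hveq]
      exact h
    have hvnorm : star v ⬝ᵥ v = 1 := by
      have h := congrFun (congrFun hB1 i) i
      simpa [Matrix.mul_apply, Matrix.one_apply, Matrix.conjTranspose_apply,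
        dotProduct, Matrix.star_apply, hv_def] using h
    have h2 := hR.dotProduct_mulVec_nonneg v
    have hc : star v ⬝ᵥ ((1 - Rᴴ * R) *ᵥ v) = ((1 - d i : ℝ) : ℂ) := by
      rw [Matrix.sub_mulVec, Matrix.one_mulVec, hv, dotProduct_sub, dotProduct_smul, hvnorm]
      push_cast
      simp [Complex.real_smul]
    rw [hc] at h2
    have : (0:ℝ) ≤ 1 - d i := by exact_mod_cast h2
    linarith
  -- diagonalize
  have hMdiag : (R * B)ᴴ * (R * B) = Matrix.diagonal fun i => (d i : ℂ) := by
    calc (R * B)ᴴ * (R * B) = Bᴴ * (Rᴴ * R) * B := by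
          rw [Matrix.conjTranspose_mul]; simp only [mul_assoc]
      _ = Bᴴ * (B * Matrix.diagonal (fun i => (d i : ℂ)) * Bᴴ) * B := by rw [hspec]
      _ = (Bᴴ * B) * Matrix.diagonal (fun i => (d i : ℂ)) * (Bᴴ * B) := by
          simp only [mul_assoc]
      _ = Matrix.diagonal fun i => (d i : ℂ) := by rw [hB1, one_mul, mul_one]
  obtain ⟨W, hWmem, hWfact⟩ := polar2 (R * B) d hd0 hMdiag
  -- the unimodular diagonal pieces
  set z : Fin 2 → ℂ := fun i => (Real.sqrt (d i) : ℂ) + (Real.sqrt (1 - d i) : ℂ) * Complex.I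
    with hz_def
  have hzstar : ∀ i, star (z i) = (Real.sqrt (d i) : ℂ) - (Real.sqrt (1 - d i) : ℂ) * Complex.I := by
    intro i
    simp [hz_def, Complex.star_def, map_add, _root_.map_mul, Complex.conj_ofReal, Complex.conj_I]
    ring
  have hsqd : ∀ i, ((Real.sqrt (d i) : ℝ) : ℂ) ^ 2 = ((d i : ℝ) : ℂ) := by
    intro i
    rw [← Complex.ofReal_pow, Real.sq_sqrt (hd0 i)]
  have hsqd' : ∀ i, ((Real.sqrt (1 - d i) : ℝ) : ℂ) ^ 2 = ((1 - d i : ℝ) : ℂ) := by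
    intro i
    rw [← Complex.ofReal_pow, Real.sq_sqrt (by linarith [hd1 i])]
  have hz1 : ∀ i, star (z i) * z i = 1 := by
    intro i
    rw [hzstar i, hz_def]
    have expand : ((Real.sqrt (d i) : ℝ) : ℂ) ^ 2 + ((Real.sqrt (1 - d i) : ℝ) : ℂ) ^ 2
        * (-(Complex.I ^ 2)) = 1 →
        ((Real.sqrt (d i) : ℝ) : ℂ) ^ 2 - ((Real.sqrt (1 - d i) : ℝ) : ℂ) ^ 2
        * Complex.I ^ 2 = 1 := by intro h; linear_combination h
    have : ((Real.sqrt (d i) : ℝ) : ℂ) ^ 2 - ((Real.sqrt (1 - d i) : ℝ) : ℂ) ^ 2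
        * Complex.I ^ 2 = 1 := by
      rw [Complex.I_sq, hsqd i, hsqd' i]
      push_cast
      ring
    linear_combination this
  have hz1' : ∀ i, star (star (z i)) * star (z i) = 1 := by
    intro i
    rw [star_star]
    rw [mul_comm]
    exact hz1 i
  have hdiagz : Matrix.diagonal z ∈ Matrix.unitaryGroup (Fin 2) ℂ := by
    rw [Matrix.mem_unitaryGroup_iff', Matrix.star_eq_conjTranspose,
      Matrix.diagonal_conjTranspose, Matrix.diagonal_mul_diagonal]
    rw [← Matrix.diagonal_one]
    exact congrArg Matrix.diagonal (funext fun i => hz1 i)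
  have hdiagz' : Matrix.diagonal (fun i => star (z i)) ∈ Matrix.unitaryGroup (Fin 2) ℂ := by
    rw [Matrix.mem_unitaryGroup_iff', Matrix.star_eq_conjTranspose,
      Matrix.diagonal_conjTranspose, Matrix.diagonal_mul_diagonal]
    rw [← Matrix.diagonal_one]
    exact congrArg Matrix.diagonal (funext fun i => hz1' i)
  have hBHmem : Bᴴ ∈ Matrix.unitaryGroup (Fin 2) ℂ := by
    rw [← Matrix.star_eq_conjTranspose]
    exact Unitary.star_mem hBmem
  refine ⟨1/2, by norm_num, W * Matrix.diagonal z * Bᴴ,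
    mul_mem (mul_mem hWmem hdiagz) hBHmem,
    W * Matrix.diagonal (fun i => star (z i)) * Bᴴ,
    mul_mem (mul_mem hWmem hdiagz') hBHmem, ?_⟩
  have hRfact : R = W * (Matrix.diagonal fun i => (Real.sqrt (d i) : ℂ)) * Bᴴ := by
    have : R = (R * B) * Bᴴ := by rw [mul_assoc, hB1', mul_one]
    rw [this, hWfact]
  have hzsum : (fun i => z i + star (z i)) = fun i => (2:ℂ) * (Real.sqrt (d i) : ℂ) := by
    funext i
    rw [hzstar i, hz_def]
    ring
  rw [show (1 - (1:ℝ)/2) = 1/2 by norm_num, ← smul_add]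
  calc R = W * (Matrix.diagonal fun i => (Real.sqrt (d i) : ℂ)) * Bᴴ := hRfact
    _ = (1/2 : ℝ) • (W * (Matrix.diagonal fun i => (2:ℂ) * (Real.sqrt (d i) : ℂ)) * Bᴴ) := by
        have : (fun i => (2:ℂ) * (Real.sqrt (d i) : ℂ))
            = (2:ℂ) • fun i => ((Real.sqrt (d i) : ℝ) : ℂ) := by
          funext i; simp [smul_eq_mul]
        rw [this, Matrix.diagonal_smul, Matrix.mul_smul, Matrix.smul_mul, ← smul_assoc]
        norm_num [Complex.real_smul]
    _ = (1/2 : ℝ) • (W * Matrix.diagonal z * Bᴴ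
          + W * Matrix.diagonal (fun i => star (z i)) * Bᴴ) := by
        have hdsum : Matrix.diagonal z + Matrix.diagonal (fun i => star (z i))
            = Matrix.diagonal fun i => (2:ℂ) * (Real.sqrt (d i) : ℂ) := by
          rw [Matrix.diagonal_add]
          exact congrArg Matrix.diagonal (funext fun i =>
            show z i + star (z i) = (2:ℂ) * (Real.sqrt (d i) : ℂ) from congrFun hzsum i)
        rw [← add_mul, ← mul_add, hdsum]
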